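/- (Modified K-means (K-medians-type) centroid consistency.) Suppose centroids β₁,…,β_K ∈ ℝ^K with min_{k≠k'}‖β_k − β_{k'}‖ ≥ c₁ > 0, points β̂₁,…,β̂ₙ with labels gᵢ and sup_i ‖β̂ᵢ − β_{gᵢ}‖ ≤ c₂, proportions π_k ≥ c/K, and 15Kc₂ ≤ c·c₁. Let à minimize Q̃(𝒜) = n⁻¹ Σᵢ min_l ‖β̂ᵢ − α_l‖ (unsquared Euclidean distances). Then the Hausdorff distance between à and {β₁,…,β_K} is at most 3Kc₂/c. -/

import Mathlib

open scoped BigOperators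

/-- The modified (K-medians-type) objective `Q̃(α) = n⁻¹ Σᵢ min_l ‖β̂ᵢ − α_l‖`. -/
noncomputable def kmedObj {n K : ℕ} (hK : 0 < K)
    (βhat : Fin n → EuclideanSpace ℝ (Fin K))
    (α : Fin K → EuclideanSpace ℝ (Fin K)) : ℝ :=
  (n : ℝ)⁻¹ * ∑ i, Finset.univ.inf' (Finset.univ_nonempty_iff.mpr ⟨⟨0, hK⟩⟩)
    (fun l => ‖βhat i - α l‖)

/-- Modified K-means centroid consistency: the minimizer of the
unsquared objective is within Hausdorff distance `3Kc₂/c` of the true centroids. -/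
theorem stmt7 (n K : ℕ) (hn : 0 < n) (hK : 0 < K)
    (c c₁ c₂ : ℝ) (hc : 0 < c) (hc1 : c ≤ 1) (hc₁ : 0 < c₁) (hc₂ : 0 < c₂)
    (β : Fin K → EuclideanSpace ℝ (Fin K)) (βhat : Fin n → EuclideanSpace ℝ (Fin K))
    (g : Fin n → Fin K)
    (hclose : ∀ i, ‖βhat i - β (g i)‖ ≤ c₂)
    (hsep : ∀ k k', k ≠ k' → c₁ ≤ ‖β k - β k'‖)
    (hπ : ∀ k, c / K ≤ ((Finset.univ.filter fun i => g i = k).card : ℝ) / n)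
    (hcond : 15 * K * c₂ ≤ c * c₁)
    (αtil : Fin K → EuclideanSpace ℝ (Fin K))
    (hmin : ∀ α : Fin K → EuclideanSpace ℝ (Fin K),
      kmedObj hK βhat αtil ≤ kmedObj hK βhat α) :
    Metric.hausdorffDist (Set.range αtil) (Set.range β) ≤ 3 * K * c₂ / c := by
  set r : ℝ := 3 * K * c₂ / c with hr
  have hKr : (1:ℝ) ≤ K := by exact_mod_cast hK
  have hKpos : (0:ℝ) < K := by linarith
  have hnr : (0:ℝ) < n := by exact_mod_cast hn
  have hr0 : (0:ℝ) ≤ r := by positivity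
  have hrc₂ : c₂ ≤ r := by
    rw [hr, le_div_iff₀ hc]; nlinarith
  -- Step 1: Q̃(αtil) ≤ c₂
  have hQ : kmedObj hK βhat αtil ≤ c₂ := by
    refine (hmin β).trans ?_
    unfold kmedObj
    have h1 : ∑ i, Finset.univ.inf' (Finset.univ_nonempty_iff.mpr ⟨⟨0, hK⟩⟩)
        (fun l => ‖βhat i - β l‖) ≤ (n : ℝ) * c₂ := by
      calc ∑ i, Finset.univ.inf' (Finset.univ_nonempty_iff.mpr ⟨⟨0, hK⟩⟩)
            (fun l => ‖βhat i - β l‖) ≤ ∑ _i : Fin n, c₂ :=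
            Finset.sum_le_sum fun i _ =>
              (Finset.inf'_le _ (Finset.mem_univ (g i))).trans (hclose i)
        _ = (n:ℝ) * c₂ := by simp [Finset.sum_const, nsmul_eq_mul]
    calc (n : ℝ)⁻¹ * ∑ i, Finset.univ.inf' (Finset.univ_nonempty_iff.mpr ⟨⟨0, hK⟩⟩)
          (fun l => ‖βhat i - β l‖) ≤ (n:ℝ)⁻¹ * ((n:ℝ) * c₂) :=
          mul_le_mul_of_nonneg_left h1 (by positivity)
      _ = c₂ := by field_simp
  -- Step 2: each β k is near some αtil l
  have hB : ∀ k, ∃ l, dist (αtil l) (β k) ≤ r := by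
    intro k
    by_contra h
    push_neg at h
    have hlow : ∀ i ∈ Finset.univ.filter (fun i => g i = k),
        r - c₂ ≤ Finset.univ.inf' (Finset.univ_nonempty_iff.mpr ⟨⟨0, hK⟩⟩)
          (fun l => ‖βhat i - αtil l‖) := by
      intro i hi
      simp only [Finset.mem_filter] at hi
      apply Finset.le_inf'
      intro l _
      have h1 : r < dist (αtil l) (β k) := h l
      have h2 : dist (αtil l) (β k) ≤ ‖βhat i - αtil l‖ + c₂ := by
        have hc' := hclose i
        rw [hi.2] at hc'
        calc dist (αtil l) (β k) ≤ dist (αtil l) (βhat i) + dist (βhat i) (β k) :=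
              dist_triangle _ _ _
          _ ≤ ‖βhat i - αtil l‖ + c₂ := by
              rw [dist_eq_norm, dist_eq_norm, norm_sub_rev]
              exact add_le_add (le_refl _) hc'
      linarith
    set S := Finset.univ.filter (fun i => g i = k) with hS
    have hsum : (S.card : ℝ) * (r - c₂)
        ≤ ∑ i, Finset.univ.inf' (Finset.univ_nonempty_iff.mpr ⟨⟨0, hK⟩⟩)
            (fun l => ‖βhat i - αtil l‖) := by
      calc (S.card : ℝ) * (r - c₂)
          = ∑ _i ∈ S, (r - c₂) := by rw [Finset.sum_const, nsmul_eq_mul]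
        _ ≤ ∑ i ∈ S, Finset.univ.inf' (Finset.univ_nonempty_iff.mpr ⟨⟨0, hK⟩⟩)
            (fun l => ‖βhat i - αtil l‖) := Finset.sum_le_sum hlow
        _ ≤ ∑ i, Finset.univ.inf' (Finset.univ_nonempty_iff.mpr ⟨⟨0, hK⟩⟩)
            (fun l => ‖βhat i - αtil l‖) :=
            Finset.sum_le_sum_of_subset_of_nonneg (Finset.filter_subset _ _)
              (fun i _ _ => Finset.le_inf' _ _ fun l _ => norm_nonneg _)
    have hcard := hπ k
    have h3 : (c / K) * (r - c₂) ≤ ((S.card : ℝ) / n) * (r - c₂) :=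
      mul_le_mul_of_nonneg_right hcard (by linarith)
    have h5 : ((S.card : ℝ) / n) * (r - c₂) ≤ kmedObj hK βhat αtil := by
      unfold kmedObj
      have : ((S.card : ℝ) / n) * (r - c₂) = (n:ℝ)⁻¹ * ((S.card : ℝ) * (r - c₂)) := by
        ring
      rw [this]
      exact mul_le_mul_of_nonneg_left hsum (by positivity)
    have h6 : c₂ < (c / K) * (r - c₂) := by
      have heq : (c / (K:ℝ)) * (r - c₂) = 3 * c₂ - c * c₂ / K := by
        rw [hr]; field_simp
      have hle : c * c₂ / (K:ℝ) ≤ c₂ := by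
        rw [div_le_iff₀ hKpos]; nlinarith
      linarith
    linarith
  choose f hf using hB
  -- Step 3: f is injective, hence surjective
  have hinj : Function.Injective f := by
    intro k k' hkk'
    by_contra hne
    have h1 := hsep k k' hne
    have h2 : ‖β k - β k'‖ ≤ 2 * r := by
      calc ‖β k - β k'‖ = dist (β k) (β k') := (dist_eq_norm _ _).symm
        _ ≤ dist (β k) (αtil (f k)) + dist (αtil (f k)) (β k') := dist_triangle _ _ _
        _ ≤ r + r := by
            refine add_le_add ?_ ?_
            · rw [dist_comm]; exact hf k
            · rw [hkk']; exact hf k'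
        _ = 2 * r := by ring
    have h2r : 2 * r < c₁ := by
      rw [hr]
      rw [show (2:ℝ) * (3 * K * c₂ / c) = 6 * K * c₂ / c by ring, div_lt_iff₀ hc]
      nlinarith [mul_pos hc hc₁, mul_pos hKpos hc₂]
    linarith
  have hsurj : Function.Surjective f := Finite.injective_iff_surjective.mp hinj
  -- Step 4: conclude
  apply Metric.hausdorffDist_le_of_mem_dist hr0
  · rintro x ⟨l, rfl⟩
    obtain ⟨k, hk⟩ := hsurj l
    exact ⟨β k, Set.mem_range_self k, by rw [← hk]; exact hf k⟩
  · rintro x ⟨k, rfl⟩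
    exact ⟨αtil (f k), Set.mem_range_self _, by rw [dist_comm]; exact hf k⟩
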